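/- Let G act on X, let α ∈ (0,1], and let A ⊆ G be nonempty and Y ⊆ X finite nonempty. If |A⁻¹ · Y| ≤ ((3 − α)/2)|Y|, then (AA⁻¹)² ⊆ Sym_α(Y) and AA⁻¹ ⊆ Sym_α(Y): i.e., for any u, v ∈ AA⁻¹, |vu · Y ∩ Y| ≥ α|Y|. -/
import Mathlib


open Pointwise

/-- If `|A⁻¹ · Y| ≤ ((3 − α)/2)|Y|` then `(AA⁻¹)² ⊆ Sym_α(Y)` and `AA⁻¹ ⊆ Sym_α(Y)`. -/
theorem stmt_2 {G X : Type*} [Group G] [MulAction G X] [DecidableEq G] [DecidableEq X]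
    (α : ℝ) (hα0 : 0 < α) (hα1 : α ≤ 1)
    (A : Finset G) (Y : Finset X) (hA : A.Nonempty) (hY : Y.Nonempty)
    (h : (((A⁻¹ : Finset G) • Y).card : ℝ) ≤ (3 - α) / 2 * Y.card) :
    (∀ u ∈ A * A⁻¹, ∀ v ∈ A * A⁻¹,
        α * Y.card ≤ ((((v * u) • Y) ∩ Y).card : ℝ)) ∧
    (∀ u ∈ A * A⁻¹, α * Y.card ≤ (((u • Y) ∩ Y).card : ℝ)) := by
  have key : ∀ u ∈ A * A⁻¹, (1 + α) / 2 * Y.card ≤ (((u • Y) ∩ Y).card : ℝ) := by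
    intro u hu
    rw [Finset.mem_mul] at hu
    obtain ⟨a, ha, b, hb, rfl⟩ := hu
    rw [Finset.mem_inv] at hb
    obtain ⟨c, hc, rfl⟩ := hb
    have hcard : (((a * c⁻¹) • Y) ∩ Y).card = ((c⁻¹ • Y) ∩ (a⁻¹ • Y)).card := by
      rw [← Finset.card_smul_finset a⁻¹ (((a * c⁻¹) • Y) ∩ Y), Finset.smul_finset_inter,
        smul_smul]
      congr 2
      group
    have h1 : c⁻¹ • Y ⊆ (A⁻¹ : Finset G) • Y :=
      Finset.smul_finset_subset_smul (Finset.inv_mem_inv hc)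
    have h2 : a⁻¹ • Y ⊆ (A⁻¹ : Finset G) • Y :=
      Finset.smul_finset_subset_smul (Finset.inv_mem_inv ha)
    have hunion : ((c⁻¹ • Y) ∪ (a⁻¹ • Y)).card ≤ ((A⁻¹ : Finset G) • Y).card :=
      Finset.card_le_card (Finset.union_subset h1 h2)
    have hie := Finset.card_inter_add_card_union (c⁻¹ • Y) (a⁻¹ • Y)
    have e1 : (c⁻¹ • Y).card = Y.card := Finset.card_smul_finset _ _
    have e2 : (a⁻¹ • Y).card = Y.card := Finset.card_smul_finset _ _
    have hkey : (Y.card : ℝ) + Y.card ≤ ((c⁻¹ • Y ∩ a⁻¹ • Y).card : ℝ) + ((A⁻¹ : Finset G) • Y).card := by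
      have : Y.card + Y.card ≤ (c⁻¹ • Y ∩ a⁻¹ • Y).card + ((A⁻¹ : Finset G) • Y).card := by
        omega
      exact_mod_cast this
    rw [hcard]
    linarith
  constructor
  · intro u hu v hv
    have hvinv : v⁻¹ ∈ A * A⁻¹ := by
      rw [Finset.mem_mul] at hv ⊢
      obtain ⟨a, ha, b, hb, rfl⟩ := hv
      rw [Finset.mem_inv] at hb
      obtain ⟨c, hc, rfl⟩ := hb
      exact ⟨c, hc, a⁻¹, Finset.inv_mem_inv ha, by group⟩
    have hku := key u hu
    have hkv := key v⁻¹ hvinv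
    have hcard : (((v * u) • Y) ∩ Y).card = ((u • Y) ∩ (v⁻¹ • Y)).card := by
      rw [← Finset.card_smul_finset v⁻¹ (((v * u) • Y) ∩ Y), Finset.smul_finset_inter,
        smul_smul]
      congr 2
      group
    have hsub1 : (u • Y ∩ Y) ∩ (v⁻¹ • Y ∩ Y) ⊆ u • Y ∩ v⁻¹ • Y := by
      intro x hx
      simp only [Finset.mem_inter] at hx ⊢
      exact ⟨hx.1.1, hx.2.1⟩
    have hsub2 : (u • Y ∩ Y) ∪ (v⁻¹ • Y ∩ Y) ⊆ Y := by
      intro x hx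
      simp only [Finset.mem_union, Finset.mem_inter] at hx
      rcases hx with h' | h' <;> exact h'.2
    have hie := Finset.card_inter_add_card_union (u • Y ∩ Y) (v⁻¹ • Y ∩ Y)
    have hkey : ((u • Y ∩ Y).card : ℝ) + (v⁻¹ • Y ∩ Y).card ≤
        ((u • Y ∩ v⁻¹ • Y).card : ℝ) + Y.card := by
      have : (u • Y ∩ Y).card + (v⁻¹ • Y ∩ Y).card ≤
          (u • Y ∩ v⁻¹ • Y).card + Y.card := by
        have := Finset.card_le_card hsub1
        have := Finset.card_le_card hsub2
        omega
      exact_mod_cast this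
    rw [hcard]
    linarith
  · intro u hu
    have := key u hu
    have hYc : (0:ℝ) ≤ Y.card := Nat.cast_nonneg _
    nlinarith
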